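/- Let A, B ∈ ℂ^{n×n}. Then ρ(A + B e^{−iθ}) < 1 for all θ ∈ ℝ if and only if A + B is Schur stable (ρ(A+B) < 1) and for all θ ∈ ℝ: det((A + Be^{−iθ})ᴴ ⊗ (A + Be^{−iθ}) − I_n ⊗ I_n) ≠ 0. -/

import Mathlib

open Matrix Complex Kronecker Polynomial Filter

namespace Stmt16Aux

variable {n : ℕ}

lemma eval_charpoly (M : Matrix (Fin n) (Fin n) ℂ) (z : ℂ) :
    M.charpoly.eval z = (z • (1 : Matrix (Fin n) (Fin n) ℂ) - M).det := by
  rw [Matrix.charpoly, ← Polynomial.coe_evalRingHom, RingHom.map_det]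
  congr 1
  ext i j
  by_cases h : i = j
  · subst h
    simp [Matrix.charmatrix_apply_eq, Matrix.smul_apply, Matrix.one_apply]
  · simp [Matrix.charmatrix_apply_ne _ _ _ h, Matrix.smul_apply, Matrix.one_apply_ne h]

lemma mem_spectrum_iff_det {M : Matrix (Fin n) (Fin n) ℂ} {z : ℂ} :
    z ∈ spectrum ℂ M ↔ (z • (1 : Matrix (Fin n) (Fin n) ℂ) - M).det = 0 := by
  rw [spectrum.mem_iff, Matrix.isUnit_iff_isUnit_det, isUnit_iff_ne_zero, not_not,
    Algebra.algebraMap_eq_smul_one]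

lemma exists_spectrum_norm_sub_pow_le (hn : n ≠ 0) (M : Matrix (Fin n) (Fin n) ℂ) (z : ℂ) :
    ∃ μ ∈ spectrum ℂ M, ‖z - μ‖ ^ n ≤ ‖(z • (1 : Matrix (Fin n) (Fin n) ℂ) - M).det‖ := by
  have hm := M.charpoly_monic
  have hsp : M.charpoly.Splits := IsAlgClosed.splits _
  have hcard : Multiset.card M.charpoly.roots = n := by
    rw [Polynomial.splits_iff_card_roots.mp hsp, Matrix.charpoly_natDegree_eq_dim,
      Fintype.card_fin]
  have hne : M.charpoly.roots.toFinset.Nonempty := by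
    rw [Multiset.toFinset_nonempty]
    intro h
    rw [h] at hcard
    simp at hcard
    exact hn hcard.symm
  obtain ⟨r0, hr0, hmin⟩ :=
    Finset.exists_min_image M.charpoly.roots.toFinset (fun r => ‖z - r‖) hne
  rw [Multiset.mem_toFinset] at hr0
  have hr0spec : r0 ∈ spectrum ℂ M := by
    rw [mem_spectrum_iff_det, ← eval_charpoly]
    exact (Polynomial.mem_roots hm.ne_zero).mp hr0
  refine ⟨r0, hr0spec, ?_⟩
  have heval : M.charpoly.eval z = ((M.charpoly.roots.map fun a => z - a)).prod := by
    conv_lhs => rw [hsp.eq_prod_roots_of_monic hm]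
    rw [Polynomial.eval_multiset_prod, Multiset.map_map]
    simp
  have hnn : ‖z - r0‖₊ ^ n ≤ ‖M.charpoly.eval z‖₊ := by
    rw [heval]
    have : ‖((M.charpoly.roots.map fun a => z - a)).prod‖₊ =
        ((M.charpoly.roots.map fun a => z - a).map fun w => ‖w‖₊).prod := by
      exact_mod_cast (Multiset.prod_hom _ (nnnormHom (α := ℂ)).toMonoidHom).symm
    rw [this, Multiset.map_map]
    have hcard' :
        Multiset.card (M.charpoly.roots.map ((fun w => ‖w‖₊) ∘ fun a => z - a)) = n := by
      rw [Multiset.card_map, hcard]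
    have hle : ‖z - r0‖₊ ^
        Multiset.card (M.charpoly.roots.map ((fun w => ‖w‖₊) ∘ fun a => z - a)) ≤
        (M.charpoly.roots.map ((fun w => ‖w‖₊) ∘ fun a => z - a)).prod := by
      apply Multiset.pow_card_le_prod
      intro x hx
      obtain ⟨a, ha, rfl⟩ := Multiset.mem_map.mp hx
      simp only [Function.comp_apply]
      have := hmin a (Multiset.mem_toFinset.mpr ha)
      exact_mod_cast this
    rwa [hcard'] at hle
  rw [← eval_charpoly]
  calc ‖z - r0‖ ^ n = ((‖z - r0‖₊ ^ n : NNReal) : ℝ) := by push_cast; rfl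
    _ ≤ ((‖M.charpoly.eval z‖₊ : NNReal) : ℝ) := by exact_mod_cast hnn
    _ = ‖M.charpoly.eval z‖ := rfl

lemma kron_mulVec (M N : Matrix (Fin n) (Fin n) ℂ) (W : Fin n × Fin n → ℂ)
    (p : Fin n × Fin n) :
    ((M ⊗ₖ N) *ᵥ W) p = (M * (Matrix.of fun k l => W (k, l)) * Nᵀ) p.1 p.2 := by
  simp only [Matrix.mulVec, dotProduct, Matrix.kroneckerMap_apply, Matrix.mul_apply,
    Matrix.transpose_apply, Matrix.of_apply]
  rw [Fintype.sum_prod_type]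
  rw [Finset.sum_comm]
  simp_rw [Finset.sum_mul]
  exact Finset.sum_congr rfl fun c _ => Finset.sum_congr rfl fun k _ => by ring

lemma kron_mulVec_prod (M N : Matrix (Fin n) (Fin n) ℂ) (u v : Fin n → ℂ) :
    (M ⊗ₖ N) *ᵥ (fun p => u p.1 * v p.2) = fun p => (M *ᵥ u) p.1 * (N *ᵥ v) p.2 := by
  funext p
  simp only [Matrix.mulVec, dotProduct, Matrix.kroneckerMap_apply]
  rw [Fintype.sum_prod_type, Finset.sum_mul_sum]
  exact Finset.sum_congr rfl fun k _ => Finset.sum_congr rfl fun l _ => by ring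

lemma detKron_eq_zero_of_unit_eigen {M : Matrix (Fin n) (Fin n) ℂ} {μ : ℂ}
    (hμ : μ ∈ spectrum ℂ M) (h1 : ‖μ‖ = 1) :
    (Mᴴ ⊗ₖ M - (1 : Matrix (Fin n) (Fin n) ℂ) ⊗ₖ 1).det = 0 := by
  rw [mem_spectrum_iff_det] at hμ
  obtain ⟨v, hv0, hv⟩ := Matrix.exists_mulVec_eq_zero_iff.mpr hμ
  have hMv : M *ᵥ v = μ • v := by
    have := hv
    rw [Matrix.sub_mulVec, sub_eq_zero, Matrix.smul_mulVec, Matrix.one_mulVec] at this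
    exact this.symm
  have hdetH : ((starRingEnd ℂ μ) • (1 : Matrix (Fin n) (Fin n) ℂ) - Mᴴ).det = 0 := by
    have heq : ((starRingEnd ℂ μ) • (1 : Matrix (Fin n) (Fin n) ℂ) - Mᴴ) =
        (μ • (1 : Matrix (Fin n) (Fin n) ℂ) - M)ᴴ := by
      rw [Matrix.conjTranspose_sub, Matrix.conjTranspose_smul, Matrix.conjTranspose_one,
        starRingEnd_apply]
    rw [heq, Matrix.det_conjTranspose, hμ, star_zero]
  obtain ⟨w, hw0, hw⟩ := Matrix.exists_mulVec_eq_zero_iff.mpr hdetH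
  have hMw : Mᴴ *ᵥ w = (starRingEnd ℂ μ) • w := by
    have := hw
    rw [Matrix.sub_mulVec, sub_eq_zero, Matrix.smul_mulVec, Matrix.one_mulVec] at this
    exact this.symm
  apply Matrix.exists_mulVec_eq_zero_iff.mp
  refine ⟨fun p => w p.1 * v p.2, ?_, ?_⟩
  · obtain ⟨i, hi⟩ := Function.ne_iff.mp hw0
    obtain ⟨j, hj⟩ := Function.ne_iff.mp hv0
    intro h
    exact mul_ne_zero hi hj (congrFun h (i, j))
  · rw [Matrix.sub_mulVec, Matrix.one_kronecker_one, Matrix.one_mulVec, kron_mulVec_prod,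
      hMw, hMv]
    funext p
    have hμμ : starRingEnd ℂ μ * μ = 1 := by
      rw [mul_comm, Complex.mul_conj']
      simp [Complex.sq_norm, Complex.normSq_eq_norm_sq, h1]
    simp only [Pi.sub_apply, Pi.smul_apply, smul_eq_mul, Pi.zero_apply]
    calc starRingEnd ℂ μ * w p.1 * (μ * v p.2) - w p.1 * v p.2
        = (starRingEnd ℂ μ * μ) * (w p.1 * v p.2) - w p.1 * v p.2 := by ring
      _ = 0 := by rw [hμμ]; ring

lemma detKron_ne_zero (hn : n ≠ 0) {M : Matrix (Fin n) (Fin n) ℂ}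
    (h : ∀ μ ∈ spectrum ℂ M, ‖μ‖ < 1) :
    (Mᴴ ⊗ₖ M - (1 : Matrix (Fin n) (Fin n) ℂ) ⊗ₖ 1).det ≠ 0 := by
  letI : NormedRing (Matrix (Fin n) (Fin n) ℂ) := Matrix.linftyOpNormedRing
  letI : NormedAlgebra ℂ (Matrix (Fin n) (Fin n) ℂ) := Matrix.linftyOpNormedAlgebra
  intro hdet
  obtain ⟨W, hW0, hWeq⟩ := Matrix.exists_mulVec_eq_zero_iff.mpr hdet
  set X : Matrix (Fin n) (Fin n) ℂ := Matrix.of fun k l => W (k, l) with hXdef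
  have hX : Mᴴ * X * Mᵀ = X := by
    ext i j
    have h0 := congrFun hWeq (i, j)
    rw [Matrix.sub_mulVec, Matrix.one_kronecker_one, Matrix.one_mulVec] at h0
    have h2 := kron_mulVec Mᴴ M W (i, j)
    simp only [Pi.sub_apply, Pi.zero_apply, sub_eq_zero] at h0
    rw [h2] at h0
    exact h0
  have hXk : ∀ k : ℕ, (Mᴴ) ^ k * X * (Mᵀ) ^ k = X := by
    intro k
    induction k with
    | zero => simp
    | succ k ih =>
      have : (Mᴴ) ^ (k + 1) * X * (Mᵀ) ^ (k + 1) =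
          (Mᴴ) ^ k * (Mᴴ * X * Mᵀ) * (Mᵀ) ^ k := by
        rw [pow_succ, pow_succ']
        simp only [Matrix.mul_assoc]
      rw [this, hX, ih]
  have hXne : X ≠ 0 := by
    intro h
    apply hW0
    funext p
    have := congrFun (congrFun h p.1) p.2
    simpa [hXdef] using this
  have hXpos : 0 < ‖X‖ := by
    rw [norm_pos_iff]
    exact hXne
  have hlow : ∀ k : ℕ, (1 : ℝ) ≤ ‖(Mᴴ) ^ k‖ * ‖(Mᵀ) ^ k‖ := by
    intro k
    have h1 : ‖X‖ ≤ ‖(Mᴴ) ^ k‖ * ‖X‖ * ‖(Mᵀ) ^ k‖ := by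
      conv_lhs => rw [← hXk k]
      calc ‖(Mᴴ) ^ k * X * (Mᵀ) ^ k‖ ≤ ‖(Mᴴ) ^ k * X‖ * ‖(Mᵀ) ^ k‖ := norm_mul_le _ _
        _ ≤ ‖(Mᴴ) ^ k‖ * ‖X‖ * ‖(Mᵀ) ^ k‖ := by
            gcongr
            exact norm_mul_le _ _
    nlinarith [norm_nonneg ((Mᴴ) ^ k), norm_nonneg ((Mᵀ) ^ k)]
  -- spectra of Mᴴ and Mᵀ
  have hspecT : ∀ μ ∈ spectrum ℂ (Mᵀ), ‖μ‖ < 1 := by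
    intro μ hμ
    apply h
    rw [mem_spectrum_iff_det] at hμ ⊢
    rw [← Matrix.det_transpose, Matrix.transpose_sub, Matrix.transpose_smul,
      Matrix.transpose_one]
    exact hμ
  have hspecH : ∀ μ ∈ spectrum ℂ (Mᴴ), ‖μ‖ < 1 := by
    intro μ hμ
    have : starRingEnd ℂ μ ∈ spectrum ℂ M := by
      rw [mem_spectrum_iff_det] at hμ ⊢
      have heq : ((starRingEnd ℂ μ) • (1 : Matrix (Fin n) (Fin n) ℂ) - M) =
          (μ • (1 : Matrix (Fin n) (Fin n) ℂ) - Mᴴ)ᴴ := by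
        rw [Matrix.conjTranspose_sub, Matrix.conjTranspose_smul, Matrix.conjTranspose_one,
          Matrix.conjTranspose_conjTranspose, starRingEnd_apply]
      rw [heq, Matrix.det_conjTranspose, hμ, star_zero]
    have := h _ this
    rwa [RCLike.norm_conj] at this
  have hρ : ∀ (N : Matrix (Fin n) (Fin n) ℂ), (∀ μ ∈ spectrum ℂ N, ‖μ‖ < 1) →
      spectralRadius ℂ N < 1 := by
    intro N hN
    have hne : (spectrum ℂ N).Nonempty := by
      obtain ⟨μ, hμ, -⟩ := exists_spectrum_norm_sub_pow_le hn N 0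
      exact ⟨μ, hμ⟩
    have hr : ∀ k ∈ spectrum ℂ N, ‖k‖₊ < (1 : NNReal) := by
      intro k hk
      have := hN k hk
      exact_mod_cast this
    have := spectrum.spectralRadius_lt_of_forall_lt_of_nonempty hne hr
    simpa using this
  have hρH := hρ _ hspecH
  have hρT := hρ _ hspecT
  have h1t := spectrum.pow_nnnorm_pow_one_div_tendsto_nhds_spectralRadius (Mᴴ)
  have h2t := spectrum.pow_nnnorm_pow_one_div_tendsto_nhds_spectralRadius (Mᵀ)
  have hHne : spectralRadius ℂ (Mᴴ) ≠ ⊤ := (hρH.trans ENNReal.one_lt_top).ne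
  have hTne : spectralRadius ℂ (Mᵀ) ≠ ⊤ := (hρT.trans ENNReal.one_lt_top).ne
  have hmul : Tendsto (fun k : ℕ => (‖(Mᴴ) ^ k‖₊ : ENNReal) ^ (1 / (k : ℝ)) *
      (‖(Mᵀ) ^ k‖₊ : ENNReal) ^ (1 / (k : ℝ))) atTop
      (nhds (spectralRadius ℂ (Mᴴ) * spectralRadius ℂ (Mᵀ))) :=
    ENNReal.Tendsto.mul h1t (Or.inr hTne) h2t (Or.inr hHne)
  have hlt1 : spectralRadius ℂ (Mᴴ) * spectralRadius ℂ (Mᵀ) < 1 := by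
    calc spectralRadius ℂ (Mᴴ) * spectralRadius ℂ (Mᵀ)
        ≤ spectralRadius ℂ (Mᴴ) * 1 := mul_le_mul_right hρT.le _
      _ = spectralRadius ℂ (Mᴴ) := mul_one _
      _ < 1 := hρH
  have hev := hmul.eventually_lt_const hlt1
  obtain ⟨k, hklt, hk1⟩ := (hev.and (eventually_ge_atTop 1)).exists
  have hk0 : (k : ℝ) ≠ 0 := Nat.cast_ne_zero.mpr (by omega)
  set a : ENNReal := (‖(Mᴴ) ^ k‖₊ : ENNReal) with ha
  set b : ENNReal := (‖(Mᵀ) ^ k‖₊ : ENNReal) with hb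
  have hab : a * b < 1 := by
    have hpow : (a ^ (1 / (k : ℝ)) * b ^ (1 / (k : ℝ))) ^ k < 1 :=
      pow_lt_one₀ zero_le hklt (by omega)
    rw [mul_pow, ← ENNReal.rpow_natCast (a ^ (1 / (k : ℝ))) k,
      ← ENNReal.rpow_natCast (b ^ (1 / (k : ℝ))) k, ← ENNReal.rpow_mul,
      ← ENNReal.rpow_mul, one_div, inv_mul_cancel₀ hk0, ENNReal.rpow_one,
      ENNReal.rpow_one] at hpow
    exact hpow
  have hab' : ‖(Mᴴ) ^ k‖ * ‖(Mᵀ) ^ k‖ < 1 := by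
    have h2 : (‖(Mᴴ) ^ k‖₊ * ‖(Mᵀ) ^ k‖₊ : NNReal) < 1 := by
      rw [ha, hb, ← ENNReal.coe_mul] at hab
      exact_mod_cast hab
    have := NNReal.coe_lt_coe.mpr h2
    simpa [← coe_nnnorm] using this
  linarith [hlow k]

end Stmt16Aux

/- STATEMENT 16 ... -/
theorem stmt16 {n : ℕ} (A B : Matrix (Fin n) (Fin n) ℂ) :
    (∀ θ : ℝ, ∀ μ ∈ spectrum ℂ (A + Complex.exp (-(θ : ℂ) * Complex.I) • B), ‖μ‖ < 1) ↔
      ((∀ μ ∈ spectrum ℂ (A + B), ‖μ‖ < 1) ∧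
        ∀ θ : ℝ,
          ((A + Complex.exp (-(θ : ℂ) * Complex.I) • B)ᴴ ⊗ₖ
              (A + Complex.exp (-(θ : ℂ) * Complex.I) • B) -
            (1 : Matrix (Fin n) (Fin n) ℂ) ⊗ₖ (1 : Matrix (Fin n) (Fin n) ℂ)).det ≠ 0) := by
  rcases Nat.eq_zero_or_pos n with hn0 | hnpos
  · subst hn0
    haveI : IsEmpty (Fin 0 × Fin 0) := ⟨fun p => p.1.elim0⟩
    constructor
    · intro _
      constructor
      · intro μ hμ
        exact absurd (spectrum.mem_iff.mp hμ) (not_not.mpr (isUnit_of_subsingleton _))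
      · intro θ
        simp [Matrix.det_isEmpty]
    · intro _ θ μ hμ
      exact absurd (spectrum.mem_iff.mp hμ) (not_not.mpr (isUnit_of_subsingleton _))
  have hn : n ≠ 0 := hnpos.ne'
  haveI : Nonempty (Fin n) := ⟨⟨0, hnpos⟩⟩
  set Mθ : ℝ → Matrix (Fin n) (Fin n) ℂ :=
    fun θ => A + Complex.exp (-(θ : ℂ) * Complex.I) • B with hMθ
  have hM0 : Mθ 0 = A + B := by
    simp [hMθ]
  have hMcont : Continuous Mθ := by
    apply continuous_const.add
    exact ((Complex.continuous_exp.comp (by fun_prop)).smul continuous_const)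
  have hdetcont : Continuous fun p : ℝ × ℂ => (p.2 • (1 : Matrix (Fin n) (Fin n) ℂ) -
      Mθ p.1).det := by
    apply Continuous.matrix_det
    exact (continuous_snd.smul continuous_const).sub (hMcont.comp continuous_fst)
  constructor
  · intro h
    refine ⟨by simpa [hM0] using h 0, fun θ => Stmt16Aux.detKron_ne_zero hn (h θ)⟩
  · rintro ⟨h1, h2⟩
    intro θ
    -- no eigenvalue on the unit circle, for any θ
    have hno1 : ∀ t : ℝ, ∀ μ ∈ spectrum ℂ (Mθ t), ‖μ‖ ≠ 1 := by
      intro t μ hμ hone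
      exact h2 t (Stmt16Aux.detKron_eq_zero_of_unit_eigen hμ hone)
    letI : NormedRing (Matrix (Fin n) (Fin n) ℂ) := Matrix.linftyOpNormedRing
    letI : NormedAlgebra ℂ (Matrix (Fin n) (Fin n) ℂ) := Matrix.linftyOpNormedAlgebra
    have hMbound : ∀ t : ℝ, ‖Mθ t‖ ≤ ‖A‖ + ‖B‖ := by
      intro t
      have hexp : ‖Complex.exp (-(t : ℂ) * Complex.I)‖ = 1 := by
        rw [Complex.norm_exp]
        have : (-(t : ℂ) * Complex.I).re = 0 := by
          simp [Complex.mul_re]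
        rw [this, Real.exp_zero]
      calc ‖Mθ t‖ ≤ ‖A‖ + ‖Complex.exp (-(t : ℂ) * Complex.I) • B‖ := norm_add_le _ _
        _ = ‖A‖ + ‖B‖ := by rw [norm_smul, hexp, one_mul]
    set S : Set ℝ := {t | ∀ μ ∈ spectrum ℂ (Mθ t), ‖μ‖ < 1} with hS
    have hSclosed : IsClosed S := by
      apply IsSeqClosed.isClosed
      intro x t hx hxt
      intro μ hμ
      by_contra hge
      push_neg at hge
      have hgt : 1 < ‖μ‖ := lt_of_le_of_ne hge (Ne.symm (hno1 t μ hμ))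
      have hdet0 : (μ • (1 : Matrix (Fin n) (Fin n) ℂ) - Mθ t).det = 0 :=
        Stmt16Aux.mem_spectrum_iff_det.mp hμ
      have hdt : Tendsto (fun k => ‖(μ • (1 : Matrix (Fin n) (Fin n) ℂ) -
          Mθ (x k)).det‖) atTop (nhds 0) := by
        have hc : Continuous fun s : ℝ => (μ • (1 : Matrix (Fin n) (Fin n) ℂ) -
            Mθ s).det := hdetcont.comp (continuous_id.prodMk continuous_const)
        have := ((hc.tendsto t).comp hxt).norm
        rwa [hdet0, norm_zero] at this
      have hev := hdt.eventually_lt_const (show (0:ℝ) < (‖μ‖ - 1) ^ n from pow_pos (by linarith) n)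
      obtain ⟨k, hk⟩ := hev.exists
      obtain ⟨ν, hν, hνle⟩ := Stmt16Aux.exists_spectrum_norm_sub_pow_le hn (Mθ (x k)) μ
      have hlt : ‖μ - ν‖ < ‖μ‖ - 1 := by
        by_contra hcon
        push_neg at hcon
        have : (‖μ‖ - 1) ^ n ≤ ‖μ - ν‖ ^ n :=
          pow_le_pow_left₀ (by linarith) hcon n
        linarith [hνle.trans_lt hk]
      have hν1 : ‖ν‖ < 1 := hx k ν hν
      have htri : ‖μ‖ - ‖ν‖ ≤ ‖μ - ν‖ := norm_sub_norm_le _ _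
      linarith
    have hSopen : IsOpen S := by
      rw [← isClosed_compl_iff]
      apply IsSeqClosed.isClosed
      intro x t hx hxt
      have hx' : ∀ k, ∃ μ, μ ∈ spectrum ℂ (Mθ (x k)) ∧ 1 ≤ ‖μ‖ := by
        intro k
        have := hx k
        simp only [hS, Set.mem_compl_iff, Set.mem_setOf_eq] at this
        push_neg at this
        obtain ⟨μ, hμ, hμ1⟩ := this
        exact ⟨μ, hμ, hμ1⟩
      choose ν hν hν1 using hx'
      have hbdd : ∀ k, ν k ∈ Metric.closedBall (0 : ℂ) (‖A‖ + ‖B‖) := by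
        intro k
        rw [Metric.mem_closedBall, dist_zero_right]
        exact (spectrum.norm_le_norm_of_mem (hν k)).trans (hMbound (x k))
      obtain ⟨μ, -, φ, hφ, hφt⟩ :=
        tendsto_subseq_of_bounded Metric.isBounded_closedBall hbdd
      have hμspec : μ ∈ spectrum ℂ (Mθ t) := by
        rw [Stmt16Aux.mem_spectrum_iff_det]
        have ht2 : Tendsto (fun k => (x (φ k), ν (φ k))) atTop (nhds (t, μ)) :=
          ((hxt.comp hφ.tendsto_atTop).prodMk_nhds hφt)
        have hcomp := (hdetcont.tendsto (t, μ)).comp ht2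
        have hz : ∀ k, ((ν (φ k)) • (1 : Matrix (Fin n) (Fin n) ℂ) -
            Mθ (x (φ k))).det = 0 := fun k => Stmt16Aux.mem_spectrum_iff_det.mp (hν _)
        have hzero : Tendsto (fun _ : ℕ => (0 : ℂ)) atTop
            (nhds ((μ • (1 : Matrix (Fin n) (Fin n) ℂ) - Mθ t).det)) := by
          convert hcomp using 1
          funext k
          exact (hz k).symm
        exact tendsto_nhds_unique hzero tendsto_const_nhds
      have hμ1 : 1 ≤ ‖μ‖ := ge_of_tendsto' hφt.norm (fun k => hν1 (φ k))
      intro hmem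
      exact absurd (hmem μ hμspec) (not_lt.mpr hμ1)
    have hSuniv : S = Set.univ := by
      apply IsClopen.eq_univ ⟨hSclosed, hSopen⟩
      exact ⟨0, by simpa [hS, hM0] using h1⟩
    have : θ ∈ S := hSuniv ▸ Set.mem_univ θ
    exact this
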